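/- Let Y be a real random variable with continuous strictly increasing CDF F and τ ∈ (0,1). Then q minimizes θ ↦ E[ρ_τ(Y − θ) − ρ_τ(Y)] over ℝ if and only if F(q) = τ, where ρ_τ(u) = u(τ − 1(u<0)). -/

import Mathlib

open MeasureTheory Filter

/-- The Koenker–Bassett quantile check function `ρ_τ(u) = u(τ − 1(u < 0))`. -/
noncomputable def checkFun (τ u : ℝ) : ℝ := u * (τ - if u < 0 then 1 else 0)

/-- Pointwise convexity (subgradient) inequality for the check function. -/
lemma checkFun_sub_ge (τ u v : ℝ) :
    (τ - if u < 0 then 1 else 0) * (v - u) ≤ checkFun τ v - checkFun τ u := by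
  unfold checkFun
  split_ifs with h1 h2 h2 <;> (try push_neg at *) <;> nlinarith

/-- Let `Y` be a real random variable with continuous, strictly increasing CDF `F`, and
`τ ∈ (0,1)`.  Assuming the shifted losses `ρ_τ(Y − θ) − ρ_τ(Y)` are integrable, a point
`q` minimizes `θ ↦ E[ρ_τ(Y − θ) − ρ_τ(Y)]` over `ℝ` if and only if `F(q) = τ`. -/
theorem quantile_minimizes_check_loss
    {Ω : Type*} [MeasurableSpace Ω] (P : Measure Ω) [IsProbabilityMeasure P]
    (Y : Ω → ℝ) (hY : Measurable Y)
    (F : ℝ → ℝ) (hF : ∀ x, F x = (P {ω | Y ω ≤ x}).toReal)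
    (hFcont : Continuous F) (hFmono : StrictMono F)
    (τ : ℝ) (hτ : τ ∈ Set.Ioo (0 : ℝ) 1)
    (hInt : ∀ θ : ℝ, Integrable (fun ω => checkFun τ (Y ω - θ) - checkFun τ (Y ω)) P)
    (q : ℝ) :
    (∀ θ : ℝ,
        (∫ ω, (checkFun τ (Y ω - q) - checkFun τ (Y ω)) ∂P) ≤
          ∫ ω, (checkFun τ (Y ω - θ) - checkFun τ (Y ω)) ∂P) ↔ F q = τ := by
  -- Step 1: P(Y < x) = F x, by continuity of F.
  have hlt : ∀ x : ℝ, (P {ω | Y ω < x}).toReal = F x := by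
    intro x
    have hmono : Monotone (fun n : ℕ => {ω | Y ω ≤ x - 1 / (n + 1)}) := by
      intro m n hmn ω hω
      simp only [Set.mem_setOf_eq] at *
      have h1 : (1 : ℝ) / (n + 1) ≤ 1 / (m + 1) := by
        apply one_div_le_one_div_of_le
        · positivity
        · exact_mod_cast by omega
      linarith
    have hunion : (⋃ n : ℕ, {ω | Y ω ≤ x - 1 / (n + 1)}) = {ω | Y ω < x} := by
      ext ω
      simp only [Set.mem_iUnion, Set.mem_setOf_eq]
      constructor
      · rintro ⟨n, hn⟩
        have : (0 : ℝ) < 1 / (n + 1) := by positivity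
        linarith
      · intro h
        obtain ⟨n, hn⟩ := exists_nat_one_div_lt (sub_pos.mpr h)
        exact ⟨n, by linarith⟩
    have hmeas : ∀ n : ℕ, MeasurableSet {ω | Y ω ≤ x - 1 / (n + 1)} := fun n =>
      hY measurableSet_Iic
    have hlim := tendsto_measure_iUnion_atTop (μ := P) hmono
    rw [hunion] at hlim
    have hfin : P {ω | Y ω < x} ≠ ⊤ := measure_ne_top P _
    have h1 : Tendsto (fun n : ℕ => (P {ω | Y ω ≤ x - 1 / (n + 1)}).toReal) atTop
        (nhds (P {ω | Y ω < x}).toReal) := (ENNReal.tendsto_toReal hfin).comp hlim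
    have h2 : Tendsto (fun n : ℕ => F (x - 1 / (n + 1))) atTop (nhds (F x)) := by
      apply (hFcont.tendsto x).comp
      have h0 : Tendsto (fun n : ℕ => 1 / ((n : ℝ) + 1)) atTop (nhds 0) :=
        tendsto_one_div_add_atTop_nhds_zero_nat
      simpa using tendsto_const_nhds.sub h0
    have h1' : Tendsto (fun n : ℕ => F (x - 1 / (n + 1))) atTop
        (nhds (P {ω | Y ω < x}).toReal) := by
      convert h1 using 2 with n
      exact hF _
    exact tendsto_nhds_unique h1' h2
  -- Step 2: integral of the affine-indicator bound.
  have hI : ∀ c k : ℝ,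
      ∫ ω, (τ - if Y ω < c then (1 : ℝ) else 0) * k ∂P = (τ - F c) * k := by
    intro c k
    have hs : MeasurableSet {ω | Y ω < c} := hY measurableSet_Iio
    have heq : (fun ω => (τ - if Y ω < c then (1 : ℝ) else 0) * k)
        = fun ω => τ * k - Set.indicator {ω | Y ω < c} (fun _ => k) ω := by
      funext ω
      by_cases h : Y ω < c <;> simp [Set.indicator, h] <;> ring
    rw [heq, integral_sub (integrable_const _) ((integrable_const k).indicator hs),
      integral_const, integral_indicator_const k hs, ← hlt c, measureReal_def, measureReal_def]
    simp [measure_univ]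
    ring
  -- Step 3: key subgradient bound on the loss differences.
  have key : ∀ a b : ℝ,
      (τ - F b) * (b - a) ≤
        (∫ ω, (checkFun τ (Y ω - a) - checkFun τ (Y ω)) ∂P)
          - ∫ ω, (checkFun τ (Y ω - b) - checkFun τ (Y ω)) ∂P := by
    intro a b
    rw [← integral_sub (hInt a) (hInt b), ← hI b (b - a)]
    have hs : MeasurableSet {ω | Y ω < b} := hY measurableSet_Iio
    have hgint : Integrable (fun ω => (τ - if Y ω < b then (1 : ℝ) else 0) * (b - a)) P := by
      have : (fun ω => (τ - if Y ω < b then (1 : ℝ) else 0) * (b - a))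
          = fun ω => τ * (b - a) - Set.indicator {ω | Y ω < b} (fun _ => (b - a)) ω := by
        funext ω
        by_cases h : Y ω < b <;> simp [Set.indicator, h] <;> ring
      rw [this]
      exact (integrable_const _).sub ((integrable_const _).indicator hs)
    apply integral_mono hgint ((hInt a).sub (hInt b))
    intro ω
    have hpt := checkFun_sub_ge τ (Y ω - b) (Y ω - a)
    have h1 : (Y ω - b < 0) ↔ (Y ω < b) := sub_neg
    have h2 : (Y ω - a) - (Y ω - b) = b - a := by ring
    simp only [h1, h2] at hpt
    simpa using hpt.trans_eq (by ring)
  obtain ⟨hτ0, hτ1⟩ := hτ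
  constructor
  · -- minimizer ⇒ F q = τ
    intro hmin
    by_contra hne
    rcases lt_or_gt_of_ne hne with hltq | hgtq
    · -- F q < τ : pick θ > q with F θ < τ
      have hopen : IsOpen {x : ℝ | F x < τ} := isOpen_lt hFcont continuous_const
      obtain ⟨ε, hε, hball⟩ := Metric.isOpen_iff.mp hopen q hltq
      set θ := q + ε / 2 with hθdef
      have hθmem : θ ∈ Metric.ball q ε := by
        rw [Metric.mem_ball, Real.dist_eq, hθdef,
          show q + ε / 2 - q = ε / 2 by ring, abs_of_pos (by linarith)]
        linarith
      have hFθ : F θ < τ := hball hθmem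
      have hk := key q θ
      have hpos : 0 < (τ - F θ) * (θ - q) :=
        mul_pos (by linarith) (by simp [hθdef]; linarith)
      have := hmin θ
      linarith
    · -- F q > τ : pick θ < q with F θ > τ
      have hopen : IsOpen {x : ℝ | τ < F x} := isOpen_lt continuous_const hFcont
      obtain ⟨ε, hε, hball⟩ := Metric.isOpen_iff.mp hopen q hgtq
      set θ := q - ε / 2 with hθdef
      have hθmem : θ ∈ Metric.ball q ε := by
        rw [Metric.mem_ball, Real.dist_eq, hθdef,
          show q - ε / 2 - q = -(ε / 2) by ring, abs_neg, abs_of_pos (by linarith)]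
        linarith
      have hFθ : τ < F θ := hball hθmem
      have hk := key q θ
      have hpos : 0 < (τ - F θ) * (θ - q) := by
        have h1 : τ - F θ < 0 := by linarith
        have h2 : θ - q < 0 := by simp [hθdef]; linarith
        exact mul_pos_of_neg_of_neg h1 h2
      have := hmin θ
      linarith
  · -- F q = τ ⇒ minimizer
    intro hq θ
    have hk := key θ q
    rw [hq] at hk
    simp at hk
    linarith
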